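/- Let X = ℝ ⊕_∞ ℓ² and E = {((n/(n+1)), (n/(n+1))·eₙ) : n ∈ ℕ} as above. Then (1, 0) belongs to the norm-closed convex hull of E. -/

import Mathlib

noncomputable section

/-- The set `E = {((n/(n+1)), (n/(n+1))·eₙ) : n ∈ ℕ}` in `ℝ ⊕_∞ ℓ²` (the product carries
the max norm), where `eₙ` is the canonical basis of `ℓ²`. -/
def stmt7E : Set (ℝ × lp (fun _ : ℕ => ℝ) 2) :=
  Set.range fun n : ℕ =>
    (((n : ℝ) / (n + 1)), ((n : ℝ) / (n + 1)) • lp.single 2 n (1 : ℝ))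

namespace Stmt7Aux

def v (n : ℕ) : lp (fun _ : ℕ => ℝ) 2 := lp.single 2 n 1

lemma hv : Orthonormal ℝ v := by
  rw [orthonormal_iff_ite]
  intro i j
  rw [v, v, lp.inner_single_left, lp.single_apply]
  split_ifs with h
  · subst h; simp
  · simp [Ne.symm h]

def a (n : ℕ) : ℝ := (n : ℝ) / (n + 1)

lemma a_nonneg (n : ℕ) : 0 ≤ a n := by unfold a; positivity

lemma a_le_one (n : ℕ) : a n ≤ 1 := by
  rw [a, div_le_one (by positivity)]; linarith

lemma one_sub_a (n : ℕ) : 1 - a n = 1 / (n + 1) := by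
  rw [a]; field_simp; ring

lemma a_mono {m n : ℕ} (h : m ≤ n) : a m ≤ a n := by
  rw [a, a, div_le_div_iff₀ (by positivity) (by positivity)]
  have : (m : ℝ) ≤ n := by exact_mod_cast h
  nlinarith

def p (n : ℕ) : ℝ × lp (fun _ : ℕ => ℝ) 2 := (a n, a n • v n)

lemma p_mem (n : ℕ) : p n ∈ stmt7E := ⟨n, rfl⟩

def x (N : ℕ) : ℝ × lp (fun _ : ℕ => ℝ) 2 :=
  ∑ k ∈ Finset.range N, ((N : ℝ)⁻¹) • p (N + k)

lemma x_mem (N : ℕ) (hN : 1 ≤ N) : x N ∈ convexHull ℝ stmt7E := by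
  refine (convex_convexHull ℝ stmt7E).sum_mem (fun k _ => by positivity) ?_
    (fun k _ => subset_convexHull ℝ stmt7E (p_mem (N + k)))
  rw [Finset.sum_const, Finset.card_range, nsmul_eq_mul]
  have : (N : ℝ) ≠ 0 := by positivity
  field_simp

lemma x_fst (N : ℕ) : (x N).1 = ∑ k ∈ Finset.range N, (N : ℝ)⁻¹ * a (N + k) := by
  simp [x, p, Prod.fst_sum]

lemma x_snd (N : ℕ) :
    (x N).2 = ∑ k ∈ Finset.range N, ((N : ℝ)⁻¹ * a (N + k)) • v (N + k) := by
  simp [x, p, Prod.snd_sum, smul_smul]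

lemma fst_bounds (N : ℕ) (hN : 1 ≤ N) :
    1 - 1/(N+1 : ℝ) ≤ (x N).1 ∧ (x N).1 ≤ 1 := by
  have hN' : (0 : ℝ) < N := by exact_mod_cast hN
  have hsum : ∑ k ∈ Finset.range N, (N : ℝ)⁻¹ = 1 := by
    rw [Finset.sum_const, Finset.card_range, nsmul_eq_mul]
    field_simp
  constructor
  · rw [x_fst]
    calc 1 - 1/(N+1 : ℝ) = ∑ k ∈ Finset.range N, (N : ℝ)⁻¹ * (1 - 1/(N+1:ℝ)) := by
          rw [← Finset.sum_mul, hsum, one_mul]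
      _ ≤ _ := by
          apply Finset.sum_le_sum
          intro k _
          apply mul_le_mul_of_nonneg_left _ (by positivity)
          rw [show (1:ℝ) - 1/(N+1) = a N by rw [← one_sub_a]; ring]
          exact a_mono (Nat.le_add_right N k)
  · rw [x_fst]
    calc ∑ k ∈ Finset.range N, (N : ℝ)⁻¹ * a (N + k)
        ≤ ∑ k ∈ Finset.range N, (N : ℝ)⁻¹ * 1 :=
          Finset.sum_le_sum fun k _ =>
            mul_le_mul_of_nonneg_left (a_le_one _) (by positivity)
      _ = 1 := by simpa using hsum

lemma snd_norm (N : ℕ) (hN : 1 ≤ N) : ‖(x N).2‖ ≤ Real.sqrt (1 / N) := by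
  have hN' : (0 : ℝ) < N := by exact_mod_cast hN
  have hvin : Orthonormal ℝ fun k : ℕ => v (N + k) :=
    hv.comp _ fun i j h => by omega
  have h2 : ‖(x N).2‖ ^ 2 ≤ 1 / N := by
    rw [← real_inner_self_eq_norm_sq, x_snd]
    rw [hvin.inner_sum (fun k => (N : ℝ)⁻¹ * a (N + k)) (fun k => (N : ℝ)⁻¹ * a (N + k))]
    simp only [starRingEnd_apply, star_trivial]
    calc ∑ k ∈ Finset.range N, ((N : ℝ)⁻¹ * a (N + k)) * ((N : ℝ)⁻¹ * a (N + k))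
        ≤ ∑ k ∈ Finset.range N, (N : ℝ)⁻¹ * (N : ℝ)⁻¹ := by
          apply Finset.sum_le_sum
          intro k _
          have h3 : (0:ℝ) ≤ (N:ℝ)⁻¹ := by positivity
          have hca : (N:ℝ)⁻¹ * a (N + k) ≤ (N:ℝ)⁻¹ := by
            simpa using mul_le_mul_of_nonneg_left (a_le_one (N + k)) h3
          exact mul_le_mul hca hca (mul_nonneg h3 (a_nonneg _)) h3
      _ = 1 / N := by
          rw [Finset.sum_const, Finset.card_range, nsmul_eq_mul]
          field_simp
  calc ‖(x N).2‖ = Real.sqrt (‖(x N).2‖ ^ 2) := by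
        rw [Real.sqrt_sq (norm_nonneg _)]
    _ ≤ Real.sqrt (1 / N) := Real.sqrt_le_sqrt h2

end Stmt7Aux

/-- The point `(1, 0)` belongs to the norm-closed convex hull of `E` in
`ℝ ⊕_∞ ℓ²`. -/
theorem stmt7 :
    ((1 : ℝ), (0 : lp (fun _ : ℕ => ℝ) 2)) ∈ closure (convexHull ℝ stmt7E) := by
  open Stmt7Aux Filter in
  have hlow : Tendsto (fun N : ℕ => 1 - 1/((N:ℝ)+1+1)) atTop (nhds 1) := by
    have h0 : Tendsto (fun N : ℕ => 1/((N:ℝ)+1+1)) atTop (nhds 0) := by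
      have := (tendsto_one_div_add_atTop_nhds_zero_nat (𝕜 := ℝ)).comp (tendsto_add_atTop_nat 1)
      convert this using 2 with n
      simp only [Function.comp_apply]
      push_cast
      ring
    simpa using tendsto_const_nhds.sub h0
  have hfst : Tendsto (fun N : ℕ => (x (N+1)).1) atTop (nhds 1) := by
    refine tendsto_of_tendsto_of_tendsto_of_le_of_le hlow tendsto_const_nhds
      (fun N => ?_) (fun N => (fst_bounds (N+1) (by omega)).2)
    have := (fst_bounds (N+1) (by omega)).1
    push_cast at this ⊢
    linarith
  have hsqrt : Tendsto (fun N : ℕ => Real.sqrt (1/((N:ℝ)+1))) atTop (nhds 0) := by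
    have := (Real.continuous_sqrt.tendsto 0).comp tendsto_one_div_add_atTop_nhds_zero_nat
    rw [Real.sqrt_zero] at this
    exact this
  have hsnd : Tendsto (fun N : ℕ => (x (N+1)).2) atTop
      (nhds (0 : lp (fun _ : ℕ => ℝ) 2)) := by
    rw [tendsto_zero_iff_norm_tendsto_zero]
    refine squeeze_zero (fun N => norm_nonneg _) (fun N => ?_) hsqrt
    have := snd_norm (N+1) (by omega)
    push_cast at this ⊢
    exact this
  have hten : Tendsto (fun N : ℕ => x (N+1)) atTop
      (nhds ((1 : ℝ), (0 : lp (fun _ : ℕ => ℝ) 2))) := hfst.prodMk_nhds hsnd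
  exact mem_closure_of_tendsto hten (Filter.Eventually.of_forall fun N => x_mem (N+1) (by omega))

end
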